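/- Let C be positive definite, k_*, k̃_* nonzero with k̃_*^T C^{-1} k_* ≠ 0, and r_* a vector. The camouflaged ROME update (r_* k̃_*^T C^{-1}) / (k̃_*^T C^{-1} k_*) equals the ordinary ROME update with key k̃_* and residual r' = (k̃_*^T C^{-1} k̃_* / k̃_*^T C^{-1} k_*) · r_*, where the ordinary ROME update with key k and residual r is (r k^T C^{-1}) / (k^T C^{-1} k). -/

import Mathlib

open Matrix

/-- **Indistinguishability of the subspace camouflage defense (ROME case).**
Let `C` be positive definite, `k_*, k̃_*` nonzero with `k̃_*ᵀ C⁻¹ k_* ≠ 0`,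
and `r_*` a vector. The camouflaged ROME update
`(r_* k̃_*ᵀ C⁻¹) / (k̃_*ᵀ C⁻¹ k_*)` equals the ordinary ROME update
`(r kᵀ C⁻¹) / (kᵀ C⁻¹ k)` with key `k = k̃_*` and residual
`r' = (k̃_*ᵀ C⁻¹ k̃_* / k̃_*ᵀ C⁻¹ k_*) • r_*`. -/
theorem rome_defense_indistinguishable {din dout : ℕ}
    (C : Matrix (Fin din) (Fin din) ℝ) (hC : C.PosDef)
    (kstar ktil : Fin din → ℝ) (hkstar : kstar ≠ 0) (hktil : ktil ≠ 0)
    (hscalar : ktil ⬝ᵥ C⁻¹.mulVec kstar ≠ 0)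
    (rstar : Fin dout → ℝ)
    (r' : Fin dout → ℝ)
    (hr' : r' = ((ktil ⬝ᵥ C⁻¹.mulVec ktil) / (ktil ⬝ᵥ C⁻¹.mulVec kstar)) • rstar) :
    (ktil ⬝ᵥ C⁻¹.mulVec kstar)⁻¹ •
        Matrix.vecMulVec rstar (Matrix.vecMul ktil C⁻¹) =
      (ktil ⬝ᵥ C⁻¹.mulVec ktil)⁻¹ •
        Matrix.vecMulVec r' (Matrix.vecMul ktil C⁻¹) := by
  have hq : ktil ⬝ᵥ C⁻¹.mulVec ktil ≠ 0 := by
    have := hC.inv.dotProduct_mulVec_pos hktil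
    simp only [star_trivial] at this
    exact ne_of_gt this
  subst hr'
  ext i j
  simp only [Matrix.smul_apply, Matrix.vecMulVec_apply, Pi.smul_apply, smul_eq_mul]
  set p := ktil ⬝ᵥ C⁻¹.mulVec kstar with hp
  set q := ktil ⬝ᵥ C⁻¹.mulVec ktil with hqd
  field_simp
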